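/- Let u be an automorphism of order 3 of the Klein four-group V_4, and let G = V_4 ⋊ ⟨u⟩. Then every automorphism φ of G such that φ(û) is conjugate in G to û is an inner automorphism of G. (In the paper's notation: Out(V_4, u) = {1}.) -/

import Mathlib

abbrev V4 := Multiplicative (ZMod 2 × ZMod 2)
def E1 : V4 := Multiplicative.ofAdd (1, 0)
def E2 : V4 := Multiplicative.ofAdd (0, 1)
def E3 : V4 := Multiplicative.ofAdd (1, 1)

lemma sqV : ∀ x : V4, x * x = 1 := by decide

lemma enumV : ∀ x : V4, x = 1 ∨ x = E1 ∨ x = E2 ∨ x = E3 := by decide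

lemma ext2 (w w' : MulAut V4) (h1 : w E1 = w' E1) (h2 : w E2 = w' E2) : w = w' := by
  ext x : 1
  rcases enumV x with h | h | h | h <;> subst h
  · simp
  · exact h1
  · exact h2
  · have h3 : E3 = E1 * E2 := by decide
    rw [h3, map_mul, map_mul, h1, h2]

lemma three_cycle (u : MulAut V4) (hu : orderOf u = 3) :
    ∀ x : V4, x = 1 ∨ x = E1 ∨ x = u E1 ∨ x = u (u E1) := by
  have u3 : u ^ 3 = 1 := by rw [← hu]; exact pow_orderOf_eq_one u
  have une : u ≠ 1 := by intro h; rw [h, orderOf_one] at hu; omega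
  have u2 : u * u ≠ 1 := by
    intro h
    have : orderOf u ∣ 2 := orderOf_dvd_of_pow_eq_one (by rwa [pow_two])
    rw [hu] at this; omega
  have uinj := u.injective
  have hE3 : E3 = E1 * E2 := by decide
  have hne1 : u E1 ≠ 1 := by
    intro h
    have := uinj (h.trans (map_one u).symm); exact absurd this (by decide)
  have hne2 : u E2 ≠ 1 := by
    intro h
    have := uinj (h.trans (map_one u).symm); exact absurd this (by decide)
  have hne12 : u E1 ≠ u E2 := by
    intro h; have := uinj h; exact absurd this (by decide)
  have mulapp : ∀ x : V4, (u * u) x = u (u x) := fun x => rfl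
  have oneapp : ∀ x : V4, (1 : MulAut V4) x = x := fun x => rfl
  rcases enumV (u E1) with h1 | h1 | h1 | h1
  · exact absurd h1 hne1
  · -- u E1 = E1
    rcases enumV (u E2) with h2 | h2 | h2 | h2
    · exact absurd h2 hne2
    · exact absurd (h1.trans h2.symm) hne12
    · -- u = 1
      exact absurd (ext2 u 1 (by rw [h1, oneapp]) (by rw [h2, oneapp])) une
    · -- u E2 = E3 : u^2 = 1
      exfalso; apply u2
      apply ext2
      · rw [mulapp, h1, h1, oneapp]
      · rw [mulapp, h2, hE3, map_mul, h1, h2, oneapp]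
        decide
  · -- u E1 = E2
    rcases enumV (u E2) with h2 | h2 | h2 | h2
    · exact absurd h2 hne2
    · -- u E2 = E1 : u^2 = 1
      exfalso; apply u2
      apply ext2
      · rw [mulapp, h1, h2, oneapp]
      · rw [mulapp, h2, h1, oneapp]
    · exact absurd (h1.trans h2.symm) hne12
    · -- good case: u E1 = E2, u E2 = E3
      intro x
      have hu2 : u (u E1) = E3 := by rw [h1, h2]
      rcases enumV x with h | h | h | h
      · exact Or.inl h
      · exact Or.inr (Or.inl h)
      · exact Or.inr (Or.inr (Or.inl (by rw [h, h1])))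
      · exact Or.inr (Or.inr (Or.inr (by rw [h, hu2])))
  · -- u E1 = E3
    rcases enumV (u E2) with h2 | h2 | h2 | h2
    · exact absurd h2 hne2
    · -- good case: u E1 = E3, u E2 = E1, so u E3 = u E1 * u E2 = E3 * E1 = E2
      intro x
      have hu2 : u (u E1) = E2 := by
        rw [h1, hE3, map_mul, h1, h2]; decide
      rcases enumV x with h | h | h | h
      · exact Or.inl h
      · exact Or.inr (Or.inl h)
      · exact Or.inr (Or.inr (Or.inr (by rw [h, hu2])))
      · exact Or.inr (Or.inr (Or.inl (by rw [h, h1])))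
    · -- u E2 = E2 : u^2 = 1
      exfalso; apply u2
      apply ext2
      · rw [mulapp, h1, hE3, map_mul, h1, h2, oneapp]
        decide
      · rw [mulapp, h2, h2, oneapp]
    · exact absurd (h1.trans h2.symm) hne12

/-- For an automorphism `u` of order 3 of the Klein four-group `V₄` and
`G = V₄ ⋊ ⟨u⟩`, every automorphism `φ` of `G` sending `û` to a `G`-conjugate of `û`
is inner; i.e. `Out(V₄, u) = 1`. -/
theorem out_klein_four_pair_trivial
    (u : MulAut (Multiplicative (ZMod 2 × ZMod 2))) (hu : orderOf u = 3)
    (φ : MulAut (SemidirectProduct (Multiplicative (ZMod 2 × ZMod 2))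
      ↥(Subgroup.zpowers u) ((Subgroup.zpowers u).subtype)))
    (hφ : IsConj
      (φ (SemidirectProduct.inr ⟨u, Subgroup.mem_zpowers u⟩))
      (SemidirectProduct.inr ⟨u, Subgroup.mem_zpowers u⟩)) :
    ∃ g : SemidirectProduct (Multiplicative (ZMod 2 × ZMod 2))
      ↥(Subgroup.zpowers u) ((Subgroup.zpowers u).subtype),
      ∀ x, φ x = g * x * g⁻¹ := by
  obtain ⟨c, hc⟩ := isConj_iff.mp hφ
  set uu : ↥(Subgroup.zpowers u) := ⟨u, Subgroup.mem_zpowers u⟩ with huu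
  set ψ := φ.trans (MulAut.conj c) with hψdef
  have hψapp : ∀ x, ψ x = c * φ x * c⁻¹ := fun x => rfl
  have hψr : ψ (SemidirectProduct.inr uu) = SemidirectProduct.inr uu := hc
  have u3 : u ^ 3 = 1 := by rw [← hu]; exact pow_orderOf_eq_one u
  -- elements of square 1 have trivial right component
  have hright : ∀ g : SemidirectProduct (Multiplicative (ZMod 2 × ZMod 2))
      ↥(Subgroup.zpowers u) ((Subgroup.zpowers u).subtype),
      g * g = 1 → g.right = 1 := by
    intro g hg
    have h2 : g.right * g.right = 1 := by
      have := congrArg SemidirectProduct.right hg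
      simpa using this
    obtain ⟨n, hn⟩ := Subgroup.mem_zpowers_iff.mp g.right.2
    have h3 : g.right ^ 3 = 1 := by
      apply Subtype.ext
      rw [SubmonoidClass.coe_pow, ← hn, ← zpow_natCast, ← zpow_mul, mul_comm,
        zpow_mul, zpow_natCast, u3, one_zpow]
      rfl
    have h4 : g.right ^ 3 = g.right * g.right * g.right := by
      rw [pow_succ, pow_two]
    rw [h4, h2, one_mul] at h3
    exact h3
  set f : V4 → V4 := fun x => (ψ (SemidirectProduct.inl x)).left with hf
  -- ψ maps inl to inl
  have hψinl : ∀ x : V4, ψ (SemidirectProduct.inl x) = SemidirectProduct.inl (f x) := by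
    intro x
    have hsq : ψ (SemidirectProduct.inl x) * ψ (SemidirectProduct.inl x) = 1 := by
      rw [← map_mul, ← map_mul, sqV x, map_one, map_one]
    have hr := hright _ hsq
    ext : 1
    · simp [hf]
    · simp [hr]
  have key1 : ∀ y : V4, ψ (SemidirectProduct.inl (u y))
      = SemidirectProduct.inr uu * ψ (SemidirectProduct.inl y) * (SemidirectProduct.inr uu)⁻¹ := by
    intro y
    have step := SemidirectProduct.inl_aut (φ := (Subgroup.zpowers u).subtype) uu y
    calc ψ (SemidirectProduct.inl (u y))
        = ψ (SemidirectProduct.inr uu * SemidirectProduct.inl y * SemidirectProduct.inr uu⁻¹) :=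
          congrArg ψ step
      _ = _ := by rw [map_mul, map_mul, hψr, map_inv, map_inv, hψr]
  have hcomm : ∀ x : V4, f (u x) = u (f x) := by
    intro x
    have h1 := key1 x
    rw [hψinl x, hψinl (u x)] at h1
    have h2 := SemidirectProduct.inl_aut (φ := (Subgroup.zpowers u).subtype) uu (f x)
    rw [map_inv] at h2
    exact SemidirectProduct.inl_injective (h1.trans h2.symm)
  have hf1 : f 1 = 1 := by
    have h0 : (SemidirectProduct.inl (1 : V4) : SemidirectProduct (Multiplicative (ZMod 2 × ZMod 2))
        ↥(Subgroup.zpowers u) ((Subgroup.zpowers u).subtype)) = 1 := map_one _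
    have : ψ (SemidirectProduct.inl (1 : V4)) = 1 := by rw [h0, map_one]
    have h2 := (hψinl 1).symm.trans this
    exact SemidirectProduct.inl_injective (h2.trans h0.symm)
  have hfe1 : f E1 ≠ 1 := by
    intro h
    have h1 : ψ (SemidirectProduct.inl E1) = 1 := by
      rw [hψinl E1, h, map_one]
    have h2 : SemidirectProduct.inl E1
        = (1 : SemidirectProduct (Multiplicative (ZMod 2 × ZMod 2))
          ↥(Subgroup.zpowers u) ((Subgroup.zpowers u).subtype)) := by
      apply ψ.injective
      rw [h1, map_one]
    have h0 : (SemidirectProduct.inl (1 : V4) : SemidirectProduct (Multiplicative (ZMod 2 × ZMod 2))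
        ↥(Subgroup.zpowers u) ((Subgroup.zpowers u).subtype)) = 1 := map_one _
    have := SemidirectProduct.inl_injective (h2.trans h0.symm)
    exact absurd this (by decide)
  -- f = u^k pointwise
  have hkex : ∃ k : ℕ, ∀ x : V4, f x = (u ^ k) x := by
    have hbase : ∃ k : ℕ, f E1 = (u ^ k) E1 := by
      rcases three_cycle u hu (f E1) with h | h | h | h
      · exact absurd h hfe1
      · exact ⟨0, by simpa using h⟩
      · exact ⟨1, by simpa using h⟩
      · exact ⟨2, by rw [h, pow_two]; rfl⟩
    obtain ⟨k, hk⟩ := hbase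
    refine ⟨k, fun x => ?_⟩
    have hswap : ∀ y : V4, u ((u ^ k) y) = (u ^ k) (u y) := by
      intro y
      have hcomm' : u * u ^ k = u ^ k * u := (Commute.refl u).pow_right k
      calc u ((u ^ k) y) = (u * u ^ k) y := rfl
        _ = (u ^ k * u) y := by rw [hcomm']
        _ = (u ^ k) (u y) := rfl
    rcases three_cycle u hu x with h | h | h | h
    · rw [h, hf1, map_one]
    · rw [h, hk]
    · rw [h, hcomm, hk, hswap]
    · rw [h, hcomm, hcomm, hk, hswap, hswap]
  obtain ⟨k, hk⟩ := hkex
  set b := (SemidirectProduct.inr uu : SemidirectProduct (Multiplicative (ZMod 2 × ZMod 2))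
      ↥(Subgroup.zpowers u) ((Subgroup.zpowers u).subtype)) ^ k with hb
  have hbpow : b = SemidirectProduct.inr (uu ^ k) := by rw [hb, map_pow]
  -- key: ψ is conjugation by b
  have key : ∀ g, ψ g = b * g * b⁻¹ := by
    intro g
    have hdecomp : g = SemidirectProduct.inl g.left * SemidirectProduct.inr g.right :=
      (SemidirectProduct.inl_left_mul_inr_right g).symm
    obtain ⟨n, hn⟩ := Subgroup.mem_zpowers_iff.mp g.right.2
    have huun : uu ^ n = g.right := Subtype.ext (by rw [SubgroupClass.coe_zpow]; exact hn)
    have hr : SemidirectProduct.inr g.right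
        = (SemidirectProduct.inr uu : SemidirectProduct (Multiplicative (ZMod 2 × ZMod 2))
          ↥(Subgroup.zpowers u) ((Subgroup.zpowers u).subtype)) ^ n := by
      rw [← huun, map_zpow]
    have hinr : ψ (SemidirectProduct.inr g.right) = SemidirectProduct.inr g.right := by
      rw [hr, map_zpow, hψr]
    have hinl : ψ (SemidirectProduct.inl g.left)
        = SemidirectProduct.inl ((u ^ k) g.left) := by
      rw [hψinl, hk]
    have h2 := SemidirectProduct.inl_aut (φ := (Subgroup.zpowers u).subtype) (uu ^ k) g.left
    have hcoe : (Subgroup.zpowers u).subtype (uu ^ k) = u ^ k := by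
      rw [Subgroup.coe_subtype, SubmonoidClass.coe_pow]
    rw [hcoe, map_inv] at h2
    have hconj_inl : b * SemidirectProduct.inl g.left * b⁻¹
        = SemidirectProduct.inl ((u ^ k) g.left) := by
      rw [hbpow]; exact h2.symm
    have hconj_inr : b * SemidirectProduct.inr g.right * b⁻¹
        = SemidirectProduct.inr g.right := by
      rw [hr, hb]; group
    calc ψ g = ψ (SemidirectProduct.inl g.left) * ψ (SemidirectProduct.inr g.right) := by
          rw [← map_mul, ← hdecomp]
      _ = (b * SemidirectProduct.inl g.left * b⁻¹) * (b * SemidirectProduct.inr g.right * b⁻¹) := by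
          rw [hinl, hinr, hconj_inl, hconj_inr]
      _ = b * (SemidirectProduct.inl g.left * SemidirectProduct.inr g.right) * b⁻¹ := by group
      _ = b * g * b⁻¹ := by rw [← hdecomp]
  refine ⟨c⁻¹ * b, fun x => ?_⟩
  have h1 := key x
  rw [hψapp] at h1
  have h2 : φ x = c⁻¹ * (b * x * b⁻¹) * c := by rw [← h1]; group
  rw [h2, mul_inv_rev]
  group
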